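/- arXiv:1606.03608 — 3 statements merged into one kernel-verified Lean document; each statement's English description precedes it below -/
import Mathlib

section
/- Let $d = 2k$ and let $A$ be a $d \times d$ integer matrix of the form $A = B + 4C + 4C^T$, where $C$ is upper triangular and $B$ is a block diagonal sum of $k$ blocks $D_i = \begin{pmatrix} x_i & 1 \\ 1 & 1 + y_i \end{pmatrix}$ with each $x_i$ and $y_i$ divisible by $4$. Then $\det A \equiv (-1)^k + \sum_{i=1}^k x_i \pmod 8$. -/
open Matrix


lemma prod_cong_aux (k : ℕ) (x y : Fin k → ℤ) (hx : ∀ i, (4:ℤ) ∣ x i) (hy : ∀ i, (4:ℤ) ∣ y i) :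
    (∏ i, (x i * (1 + y i) - 1)) ≡ (-1)^k + ∑ i, x i [ZMOD 8] := by
  induction k with
  | zero => simp
  | succ n ih =>
    rw [Fin.prod_univ_succ, Fin.sum_univ_succ]
    have h1 := ih (fun i => x i.succ) (fun i => y i.succ) (fun i => hx _) (fun i => hy _)
    obtain ⟨a, ha⟩ := hx 0
    obtain ⟨b, hb⟩ := hy 0
    have hS : (4:ℤ) ∣ ∑ i : Fin n, x i.succ := Finset.dvd_sum fun i _ => hx _
    obtain ⟨s, hs⟩ := hS
    obtain ⟨t, ht⟩ := Int.ModEq.dvd h1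
    -- ht : 8 ∣ ((-1)^n + ∑) - ∏  ... check direction
    rw [Int.modEq_iff_dvd]
    rw [pow_succ]
    rcases Nat.even_or_odd n with he | he
    · rw [he.neg_one_pow] at ht ⊢
      have hP : (∏ i : Fin n, (x i.succ * (1 + y i.succ) - 1)) = 1 + 4*s - 8*t := by omega
      rw [hP, ha, hb, hs]
      exact ⟨s - 2*a*s - 2*a*b - t + 4*a*t - 8*a*b*s + 16*a*b*t, by ring⟩
    · rw [he.neg_one_pow] at ht ⊢
      have hP : (∏ i : Fin n, (x i.succ * (1 + y i.succ) - 1)) = -1 + 4*s - 8*t := by omega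
      rw [hP, ha, hb, hs]
      exact ⟨a + s - t - 2*a*s + 4*a*t + 2*a*b - 8*a*b*s + 16*a*b*t, by ring⟩


lemma detB_eq (k : ℕ) (x y : Fin k → ℤ)
    (B : Matrix (Fin (2 * k)) (Fin (2 * k)) ℤ)
    (hB : ∀ i j : Fin (2 * k), B i j =
      if i = j then
        (if (i : ℕ) % 2 = 0 then x ⟨(i : ℕ) / 2, Nat.div_lt_of_lt_mul i.isLt⟩
         else 1 + y ⟨(i : ℕ) / 2, Nat.div_lt_of_lt_mul i.isLt⟩)
      else if (i : ℕ) / 2 = (j : ℕ) / 2 then 1 else 0) :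
    B.det = ∏ i, (x i * (1 + y i) - 1) := by
  classical
  set D : Fin k → Matrix (Fin 2) (Fin 2) ℤ := fun i => !![x i, 1; 1, 1 + y i] with hD
  let e : Fin (2 * k) ≃ Fin 2 × Fin k :=
    { toFun := fun r => (⟨(r : ℕ) % 2, by omega⟩, ⟨(r : ℕ) / 2, Nat.div_lt_of_lt_mul r.isLt⟩)
      invFun := fun p => ⟨2 * (p.2 : ℕ) + (p.1 : ℕ), by have := p.1.isLt; have := p.2.isLt; omega⟩
      left_inv := fun r => by ext; simp; omega
      right_inv := fun p => by
        ext
        · simp; omega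
        · simp; omega }
  have hBsub : B = (blockDiagonal D).submatrix e e := by
    ext i j
    rw [submatrix_apply, hB i j]
    have he : ∀ r : Fin (2 * k), e r =
        (⟨(r : ℕ) % 2, by omega⟩, ⟨(r : ℕ) / 2, Nat.div_lt_of_lt_mul r.isLt⟩) := fun r => rfl
    rw [he i, he j, blockDiagonal_apply]
    by_cases hij : i = j
    · subst hij
      rw [if_pos rfl, if_pos rfl]
      rcases Nat.mod_two_eq_zero_or_one (i : ℕ) with h | h <;>
        simp only [h, if_pos, if_neg, hD] <;> simp [show ((⟨0, by omega⟩ : Fin 2)) = 0 from rfl,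
          show ((⟨1, by omega⟩ : Fin 2)) = 1 from rfl]
    · rw [if_neg hij]
      by_cases hdiv : (i : ℕ) / 2 = (j : ℕ) / 2
      · rw [if_pos hdiv, if_pos (by exact Fin.ext hdiv)]
        have hne : (i : ℕ) % 2 ≠ (j : ℕ) % 2 := by
          intro h; exact hij (Fin.ext (by omega))
        rcases Nat.mod_two_eq_zero_or_one (i : ℕ) with h1 | h1 <;>
          rcases Nat.mod_two_eq_zero_or_one (j : ℕ) with h2 | h2 <;>
          simp only [h1, h2] at hne ⊢ <;>
          first
            | exact absurd rfl hne
            | simp [hD, show ((⟨0, by omega⟩ : Fin 2)) = 0 from rfl,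
                show ((⟨1, by omega⟩ : Fin 2)) = 1 from rfl]
      · rw [if_neg hdiv, if_neg (by intro h; exact hdiv (by simpa using congrArg Fin.val h))]
  rw [hBsub, det_submatrix_equiv_self, det_blockDiagonal]
  refine Finset.prod_congr rfl fun i _ => ?_
  rw [hD]
  simp [Matrix.det_fin_two]


lemma det_expand (n : ℕ) (B M : Matrix (Fin n) (Fin n) ℤ) :
    (B + (4:ℤ) • M).det ≡ B.det + 4 * ∑ i, (B.updateRow i (M i)).det [ZMOD 8] := by
  classical
  set f : (Fin n → ℤ) [⋀^Fin n]→ₗ[ℤ] ℤ := Matrix.detRowAlternating with hf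
  have hdet : ∀ N : Matrix (Fin n) (Fin n) ℤ, N.det = f N := fun _ => rfl
  have key : ((B + (4:ℤ) • M : Matrix (Fin n) (Fin n) ℤ) : Fin n → Fin n → ℤ)
      = (fun i => ((4:ℤ) • M : Matrix (Fin n) (Fin n) ℤ) i) + (fun i => B i) := by
    funext i j
    simp [Matrix.add_apply, add_comm]
  have h1 : (B + (4:ℤ) • M).det
      = ∑ s : Finset (Fin n), f (s.piecewise ((4:ℤ) • M) B) := by
    rw [hdet, key]
    exact f.toMultilinearMap.map_add_univ _ _
  have h2 : ∀ s : Finset (Fin n),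
      f (s.piecewise ((4:ℤ) • M) B) = 4 ^ s.card * f (s.piecewise M B) := by
    intro s
    have hp : s.piecewise ((4:ℤ) • M : Matrix (Fin n) (Fin n) ℤ) B
        = s.piecewise (fun i => (4:ℤ) • (s.piecewise (M : Fin n → Fin n → ℤ) B) i)
            (s.piecewise (M : Fin n → Fin n → ℤ) B) := by
      funext i
      by_cases h : i ∈ s
      · rw [Finset.piecewise_eq_of_mem _ _ _ h]
        exact (Finset.piecewise_eq_of_mem _ _ _ h).trans
          (congrArg (fun v => (4:ℤ) • v) (Finset.piecewise_eq_of_mem s (M : Fin n → Fin n → ℤ) B h).symm)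
      · rw [Finset.piecewise_eq_of_notMem _ _ _ h]
        exact (Finset.piecewise_eq_of_notMem _ _ _ h).trans
          (Finset.piecewise_eq_of_notMem _ _ _ h).symm
    rw [hp]
    exact (f.toMultilinearMap.map_piecewise_smul (fun _ => (4:ℤ)) (s.piecewise M B) s).trans
      (by rw [Finset.prod_const, smul_eq_mul]; rfl)
  set g : Finset (Fin n) → ℤ := fun s => 4 ^ s.card * f (s.piecewise M B) with hg
  have h3 : (B + (4:ℤ) • M).det = ∑ s : Finset (Fin n), g s := by
    rw [h1]; exact Finset.sum_congr rfl fun s _ => h2 s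
  have henum : Finset.univ.filter (fun s : Finset (Fin n) => s.card ≤ 1)
      = insert ∅ (Finset.univ.image fun i : Fin n => ({i} : Finset (Fin n))) := by
    ext s
    simp only [Finset.mem_filter, Finset.mem_univ, true_and, Finset.mem_insert, Finset.mem_image]
    constructor
    · intro h
      rcases Nat.le_one_iff_eq_zero_or_eq_one.mp h with h0 | h1
      · exact Or.inl (Finset.card_eq_zero.mp h0)
      · obtain ⟨i, rfl⟩ := Finset.card_eq_one.mp h1
        exact Or.inr ⟨i, rfl⟩
    · rintro (rfl | ⟨i, rfl⟩) <;> simp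
  have hsmall : ∑ s ∈ Finset.univ.filter (fun s : Finset (Fin n) => s.card ≤ 1), g s
      = B.det + 4 * ∑ i, (B.updateRow i (M i)).det := by
    rw [henum, Finset.sum_insert (by simp)]
    rw [Finset.sum_image (fun i _ j _ h => Finset.singleton_injective h)]
    congr 1
    · simp only [hg, Finset.piecewise_empty, Finset.card_empty, pow_zero, one_mul]
      rw [hdet]; congr 1
    · rw [Finset.mul_sum]
      refine Finset.sum_congr rfl fun i _ => ?_
      simp only [hg, Finset.piecewise_singleton, Finset.card_singleton, pow_one]
      congr 1
      rw [hdet]; congr 1; exact Finset.piecewise_singleton (f := (M : Fin n → Fin n → ℤ)) _ _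
  have hbig : (8:ℤ) ∣ ∑ s ∈ Finset.univ.filter (fun s : Finset (Fin n) => ¬ s.card ≤ 1), g s := by
    refine Finset.dvd_sum fun s hs => ?_
    simp only [Finset.mem_filter, not_le] at hs
    have hc : (4:ℤ) ^ s.card = 16 * 4 ^ (s.card - 2) := by
      rw [show (16:ℤ) = 4 ^ 2 by norm_num, ← pow_add]
      congr 1
      omega
    exact ⟨2 * (4 ^ (s.card - 2) * f (s.piecewise M B)), by rw [hg]; dsimp only; rw [hc]; ring⟩
  have h4 : (B + (4:ℤ) • M).det
      = (B.det + 4 * ∑ i, (B.updateRow i (M i)).det)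
        + ∑ s ∈ Finset.univ.filter (fun s : Finset (Fin n) => ¬ s.card ≤ 1), g s := by
    rw [h3, ← hsmall, Finset.sum_filter_add_sum_filter_not]
  rw [h4]
  exact (Int.modEq_iff_dvd.mpr (by simpa using (dvd_neg.mpr hbig))).symm


lemma sum_updateRow_eq (n : ℕ) (B C : Matrix (Fin n) (Fin n) ℤ) (hBs : Bᵀ = B) :
    ∑ i, (B.updateRow i ((C + Cᵀ) i)).det = 2 * ∑ i, ∑ j, B.adjugate i j * C i j := by
  have key : ∀ (v : Fin n → ℤ) (i : Fin n),
      (B.updateRow i v).det = ∑ j, B.adjugate i j * v j := by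
    intro v i
    rw [← det_transpose, ← updateCol_transpose, hBs, ← cramer_apply,
      cramer_eq_adjugate_mulVec]
    simp [mulVec, dotProduct]
  have hadjs : (B.adjugate)ᵀ = B.adjugate := by
    rw [adjugate_transpose, hBs]
  have hadj : ∀ i j, B.adjugate j i = B.adjugate i j := by
    intro i j
    exact congrFun (congrFun hadjs i) j
  calc ∑ i, (B.updateRow i ((C + Cᵀ) i)).det
      = ∑ i, ((B.updateRow i (C i)).det + (B.updateRow i (Cᵀ i)).det) := by
        refine Finset.sum_congr rfl fun i _ => ?_
        rw [show ((C + Cᵀ) i) = C i + Cᵀ i from rfl, det_updateRow_add]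
    _ = (∑ i, ∑ j, B.adjugate i j * C i j) + ∑ i, ∑ j, B.adjugate i j * Cᵀ i j := by
        rw [← Finset.sum_add_distrib]
        exact Finset.sum_congr rfl fun i _ => by rw [key, key]
    _ = 2 * ∑ i, ∑ j, B.adjugate i j * C i j := by
        have : (∑ i, ∑ j, B.adjugate i j * Cᵀ i j) = ∑ i, ∑ j, B.adjugate i j * C i j := by
          rw [Finset.sum_comm]
          refine Finset.sum_congr rfl fun i _ => Finset.sum_congr rfl fun j _ => ?_
          rw [transpose_apply, hadj]
        rw [this, two_mul]

/-- Lemma `levine-argument-modified`: det A ≡ (-1)^k + ∑ xᵢ mod 8. -/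
theorem det_block_congruence (k : ℕ) (x y : Fin k → ℤ)
    (hx : ∀ i, (4 : ℤ) ∣ x i) (hy : ∀ i, (4 : ℤ) ∣ y i)
    (B C A : Matrix (Fin (2 * k)) (Fin (2 * k)) ℤ)
    (hC : ∀ i j : Fin (2 * k), (j : ℕ) ≤ (i : ℕ) → C i j = 0)
    (hB : ∀ i j : Fin (2 * k), B i j =
      if i = j then
        (if (i : ℕ) % 2 = 0 then x ⟨(i : ℕ) / 2, by have := i.isLt; omega⟩
         else 1 + y ⟨(i : ℕ) / 2, by have := i.isLt; omega⟩)
      else if (i : ℕ) / 2 = (j : ℕ) / 2 then 1 else 0)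
    (hA : A = B + (4 : ℤ) • C + (4 : ℤ) • Cᵀ) :
    A.det ≡ (-1) ^ k + ∑ i, x i [ZMOD 8] := by
  have hBsymm : Bᵀ = B := by
    ext i j
    rw [transpose_apply, hB j i, hB i j]
    by_cases h : i = j
    · subst h; rfl
    · rw [if_neg (fun hh => h hh.symm), if_neg h]
      by_cases h2 : (i : ℕ) / 2 = (j : ℕ) / 2
      · rw [if_pos h2.symm, if_pos h2]
      · rw [if_neg (fun hh => h2 hh.symm), if_neg h2]
  have hM : A = B + (4 : ℤ) • (C + Cᵀ) := by rw [hA, smul_add, add_assoc]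
  rw [hM]
  refine (det_expand (2 * k) B (C + Cᵀ)).trans ?_
  rw [sum_updateRow_eq (2 * k) B C hBsymm]
  have h8 : B.det + 4 * (2 * ∑ i, ∑ j, B.adjugate i j * C i j) ≡ B.det [ZMOD 8] :=
    Int.ModEq.symm (Int.modEq_iff_dvd.mpr
      ⟨∑ i, ∑ j, B.adjugate i j * C i j, by ring⟩)
  refine h8.trans ?_
  rw [detB_eq k x y B hB]
  exact prod_cong_aux k x y hx hy
end

section
/- Suppose $g(t), \Delta(t), f(t) \in \mathbb{Z}[t,t^{-1}]$ satisfy $g(t) = \Delta(t) \cdot f(t) \cdot f(t^{-1})$ and $f(1) = \pm 1$. Then $g(-1) \equiv \Delta(-1) \pmod 8$. -/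
open LaurentPolynomial
noncomputable def laurentEval (u : ℤˣ) : LaurentPolynomial ℤ →ₐ[ℤ] ℤ :=
  AddMonoidAlgebra.lift ℤ ℤ ℤ ((Units.coeHom ℤ).comp (zpowersHom ℤˣ u))

lemma laurentEval_T (u : ℤˣ) (n : ℤ) : laurentEval u (T n) = ((u ^ n : ℤˣ) : ℤ) := by
  rw [laurentEval, T, AddMonoidAlgebra.lift_single]
  simp [zpowersHom_apply]

lemma laurentEval_invert (f : LaurentPolynomial ℤ) :
    laurentEval (-1) (LaurentPolynomial.invert f) = laurentEval (-1) f := by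
  have : (laurentEval (-1)).comp (invert (R := ℤ)).toAlgHom = laurentEval (-1) := by
    apply AddMonoidAlgebra.algHom_ext
    intro n
    show laurentEval (-1) (invert (T n)) = laurentEval (-1) (T n)
    rw [invert_T, laurentEval_T, laurentEval_T, zpow_neg, Int.units_inv_eq_self]
    exact Subsingleton.elim _ _
  exact DFunLike.congr_fun this f

lemma laurentEval_mod_two (f : LaurentPolynomial ℤ) :
    laurentEval (-1) f ≡ laurentEval 1 f [ZMOD 2] := by
  have : ((Int.castRingHom (ZMod 2)).toIntAlgHom.comp (laurentEval (-1)))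
      = ((Int.castRingHom (ZMod 2)).toIntAlgHom.comp (laurentEval 1)) := by
    apply AddMonoidAlgebra.algHom_ext
    intro n
    show ((laurentEval (-1) (T n) : ℤ) : ZMod 2) = ((laurentEval 1 (T n) : ℤ) : ZMod 2)
    rw [laurentEval_T, laurentEval_T]
    rcases Int.units_eq_one_or ((-1) ^ n) with h | h <;> simp [h] <;> decide
    exact Subsingleton.elim _ _
  exact (ZMod.intCast_eq_intCast_iff _ _ _).mp (DFunLike.congr_fun this f)

/-- If `g(t) = Δ(t) f(t) f(t⁻¹)` with `f(1) = ±1`, then `g(-1) ≡ Δ(-1) mod 8`. -/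
theorem eval_neg_one_mod_eight (g Δ f : LaurentPolynomial ℤ)
    (hg : g = Δ * f * LaurentPolynomial.invert f)
    (hf : laurentEval 1 f = 1 ∨ laurentEval 1 f = -1) :
    laurentEval (-1) g ≡ laurentEval (-1) Δ [ZMOD 8] := by
  set a := laurentEval (-1) f with ha'
  set d := laurentEval (-1) Δ with hd'
  have hgval : laurentEval (-1) g = d * a * a := by
    rw [hg, map_mul, map_mul, laurentEval_invert]
  have ha : Odd a := by
    have h2 := laurentEval_mod_two f
    rw [← ha'] at h2
    rcases hf with h | h <;> rw [h] at h2
    · exact Int.odd_iff.mpr h2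
    · exact Int.odd_iff.mpr (h2.trans (show (-1:ℤ) ≡ 1 [ZMOD 2] by decide))
  obtain ⟨k, hk⟩ := ha
  obtain ⟨m, hm⟩ := Int.even_mul_succ_self k
  have h8 : (8 : ℤ) ∣ a * a - 1 := ⟨m, by rw [hk]; nlinarith [hm]⟩
  rw [hgval]
  exact (Int.modEq_iff_dvd.mpr (by simpa [mul_sub, mul_assoc] using h8.mul_left d)).symm
end

section
/- Let $V$ be a $\mathbb{Z}/2$-vector space with symmetric bilinear form $\lambda$ and quadratic enhancement $q$, and suppose $\{e_1, f_1, \dots, e_n, f_n\}$ is a symplectic basis, i.e., $\lambda(e_i, e_j) = 0 = \lambda(f_i, f_j)$ and $\lambda(e_i, f_j) = \delta_{ij}$. Then the Arf invariant $\mathrm{Arf}(V, \lambda, q) := \sum_{i=1}^n q(e_i) q(f_i) \in \mathbb{Z}/2$ is independent of the choice of symplectic basis. -/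
namespace ArfAux

def splitEquiv {n : ℕ} : (Fin n → ZMod 2 × ZMod 2) ≃ ((Fin n ⊕ Fin n) → ZMod 2) where
  toFun g := Sum.elim (fun i => (g i).1) (fun i => (g i).2)
  invFun c i := (c (Sum.inl i), c (Sum.inr i))
  left_inv g := rfl
  right_inv c := by funext i; cases i <;> rfl

def eps (t : ZMod 2) : ℤ := if t = 0 then 1 else -1

lemma eps_add (s t : ZMod 2) : eps (s + t) = eps s * eps t := by revert s t; decide

lemma eps_inj {s t : ZMod 2} (h : eps s = eps t) : s = t := by revert s t h; decide

lemma eps_sum {ι : Type*} (s : Finset ι) (f : ι → ZMod 2) :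
    eps (∑ i ∈ s, f i) = ∏ i ∈ s, eps (f i) := by
  classical
  induction s using Finset.induction_on with
  | empty => simp [eps]
  | insert _ _ h ih => rw [Finset.sum_insert h, Finset.prod_insert h, eps_add, ih]

lemma eps_pair (u v : ZMod 2) :
    ∑ p : ZMod 2 × ZMod 2, eps (p.1 * u + p.2 * v + p.1 * p.2) = 2 * eps (u * v) := by
  revert u v; decide

section

variable {V : Type*} [AddCommGroup V] [Module (ZMod 2) V]
  (B : V →ₗ[ZMod 2] V →ₗ[ZMod 2] ZMod 2) (q : V → ZMod 2)
  (hq : ∀ x y, q x + q y + q (x + y) = B x y)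

include hq

lemma q_zero : q 0 = 0 := by
  have h := hq 0 0
  simp only [add_zero, map_zero, LinearMap.zero_apply] at h
  have key : ∀ a : ZMod 2, a + a + a = 0 → a = 0 := by decide
  exact key _ h

lemma q_add (x y : V) : q (x + y) = q x + q y + B x y := by
  have key : ∀ a b c d : ZMod 2, a + b + c = d → c = a + b + d := by decide
  exact key _ _ _ _ (hq x y)

lemma q_smul (c : ZMod 2) (v : V) : q (c • v) = c * q v := by
  fin_cases c
  · change q ((0 : ZMod 2) • v) = (0 : ZMod 2) * q v
    simpa using q_zero B q hq
  · change q ((1 : ZMod 2) • v) = (1 : ZMod 2) * q v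
    simp

lemma q_sum_isotropic {ι : Type*} (s : Finset ι) (v : ι → V)
    (hv : ∀ i j, B (v i) (v j) = 0) (c : ι → ZMod 2) :
    q (∑ i ∈ s, c i • v i) = ∑ i ∈ s, c i * q (v i) := by
  classical
  induction s using Finset.induction_on with
  | empty => simpa using q_zero B q hq
  | @insert a s ha ih =>
      rw [Finset.sum_insert ha, Finset.sum_insert ha, q_add B q hq, ih]
      have hB : B (c a • v a) (∑ i ∈ s, c i • v i) = 0 := by
        rw [map_smul, LinearMap.smul_apply, map_sum]
        simp [hv]
      rw [hB, q_smul B q hq, add_zero]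

lemma arf_char (n : ℕ) (b : Module.Basis (Fin n ⊕ Fin n) (ZMod 2) V)
    (hb₁ : ∀ i j, B (b (Sum.inl i)) (b (Sum.inl j)) = 0)
    (hb₂ : ∀ i j, B (b (Sum.inr i)) (b (Sum.inr j)) = 0)
    (hb₃ : ∀ i j, B (b (Sum.inl i)) (b (Sum.inr j)) = if i = j then 1 else 0) :
    ∑ c : (Fin n ⊕ Fin n) → ZMod 2, eps (q (b.equivFun.symm c)) =
      2 ^ n * eps (∑ i, q (b (Sum.inl i)) * q (b (Sum.inr i))) := by
  classical
  -- rewrite each summand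
  have hsummand : ∀ c : (Fin n ⊕ Fin n) → ZMod 2,
      eps (q (b.equivFun.symm c)) =
        ∏ i : Fin n, eps (c (Sum.inl i) * q (b (Sum.inl i)) +
          c (Sum.inr i) * q (b (Sum.inr i)) + c (Sum.inl i) * c (Sum.inr i)) := by
    intro c
    rw [Module.Basis.equivFun_symm_apply, Fintype.sum_sum_type, q_add B q hq,
      q_sum_isotropic B q hq _ _ hb₁, q_sum_isotropic B q hq _ _ hb₂]
    have hBEF : B (∑ i, c (Sum.inl i) • b (Sum.inl i)) (∑ i, c (Sum.inr i) • b (Sum.inr i))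
        = ∑ i, c (Sum.inl i) * c (Sum.inr i) := by
      simp only [map_sum, map_smul, LinearMap.sum_apply, LinearMap.smul_apply, hb₃,
        smul_eq_mul, mul_ite, mul_one, mul_zero]
      simp [Finset.sum_ite_eq', mul_comm]
    rw [hBEF, ← Finset.sum_add_distrib, ← Finset.sum_add_distrib, eps_sum]
  simp only [hsummand]
  -- reindex: functions on a sum type are pairs of functions
  set F : (i : Fin n) → ZMod 2 × ZMod 2 → ℤ := fun i p =>
    eps (p.1 * q (b (Sum.inl i)) + p.2 * q (b (Sum.inr i)) + p.1 * p.2) with hF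
  rw [← Fintype.sum_equiv ArfAux.splitEquiv (fun g => ∏ i, F i (g i))
      (fun c => ∏ i : Fin n, eps (c (Sum.inl i) * q (b (Sum.inl i)) +
        c (Sum.inr i) * q (b (Sum.inr i)) + c (Sum.inl i) * c (Sum.inr i)))
      (fun g => rfl)]
  have := Finset.prod_univ_sum (fun _ : Fin n => (Finset.univ : Finset (ZMod 2 × ZMod 2))) F
  rw [Fintype.piFinset_univ] at this
  rw [← this]
  simp only [hF, eps_pair]
  rw [Finset.prod_mul_distrib, Finset.prod_const, Finset.card_univ, Fintype.card_fin,
    ← eps_sum]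

end

end ArfAux

/-- The Arf invariant `∑ q(eᵢ)q(fᵢ)` of a quadratic form over `ℤ/2` is
independent of the choice of symplectic basis. -/
theorem arf_invariant_well_defined (V : Type*) [AddCommGroup V]
    [Module (ZMod 2) V] (n : ℕ)
    (B : V →ₗ[ZMod 2] V →ₗ[ZMod 2] ZMod 2)
    (q : V → ZMod 2)
    (hq : ∀ x y, q x + q y + q (x + y) = B x y)
    (b b' : Module.Basis (Fin n ⊕ Fin n) (ZMod 2) V)
    (hb₁ : ∀ i j, B (b (Sum.inl i)) (b (Sum.inl j)) = 0)
    (hb₂ : ∀ i j, B (b (Sum.inr i)) (b (Sum.inr j)) = 0)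
    (hb₃ : ∀ i j, B (b (Sum.inl i)) (b (Sum.inr j)) = if i = j then 1 else 0)
    (hb'₁ : ∀ i j, B (b' (Sum.inl i)) (b' (Sum.inl j)) = 0)
    (hb'₂ : ∀ i j, B (b' (Sum.inr i)) (b' (Sum.inr j)) = 0)
    (hb'₃ : ∀ i j, B (b' (Sum.inl i)) (b' (Sum.inr j)) = if i = j then 1 else 0) :
    ∑ i, q (b (Sum.inl i)) * q (b (Sum.inr i)) =
      ∑ i, q (b' (Sum.inl i)) * q (b' (Sum.inr i)) := by
  classical
  have h1 := ArfAux.arf_char B q hq n b hb₁ hb₂ hb₃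
  have h2 := ArfAux.arf_char B q hq n b' hb'₁ hb'₂ hb'₃
  have hS : ∑ c : (Fin n ⊕ Fin n) → ZMod 2, ArfAux.eps (q (b.equivFun.symm c)) =
      ∑ c : (Fin n ⊕ Fin n) → ZMod 2, ArfAux.eps (q (b'.equivFun.symm c)) := by
    refine Fintype.sum_equiv ((b.equivFun.symm.trans b'.equivFun).toEquiv) _ _ fun c => ?_
    simp only [LinearEquiv.coe_toEquiv, LinearEquiv.trans_apply, LinearEquiv.symm_apply_apply]
  rw [h1, h2] at hS
  have h2n : (2 : ℤ) ^ n ≠ 0 := by positivity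
  exact ArfAux.eps_inj (mul_left_cancel₀ h2n hS)
end
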